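/- Let G = (V, E) be the (finite) graph of a neighbourly abstract cubical complex K = (V, 𝒞). Then the edge expansion of G satisfies χ(G) ≥ 1; that is, for every nonempty subset X ⊆ V with |X| ≤ |V|/2, the number of edges of G with exactly one endpoint in X is at least |X|. -/

import Mathlib

/-- A subset of the vertex set of the cube `{0,1}^d` is a *face* if it is obtained by
fixing some set of coordinates to constant values. -/
def IsCubeFace {d : ℕ} (s : Set (Fin d → Bool)) : Prop :=
  ∃ (S : Set (Fin d)) (a : Fin d → Bool), s = {x | ∀ j ∈ S, x j = a j}

/-- An abstract cubical complex on a vertex set `V`: a collection of "cubes" that is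
closed under pairwise intersection (up to the empty set), each cube being in bijection
with some `{0,1}^d` in such a way that the subcubes of the complex contained in it
correspond exactly to the faces of `{0,1}^d`. -/
structure AbstractCubicalComplex (V : Type*) where
  cubes : Set (Set V)
  inter_closed : ∀ c₁ ∈ cubes, ∀ c₂ ∈ cubes, c₁ ∩ c₂ = ∅ ∨ c₁ ∩ c₂ ∈ cubes
  cube_structure : ∀ c ∈ cubes, ∃ (d : ℕ) (φ : (Fin d → Bool) → V),
    Function.Injective φ ∧ Set.range φ = c ∧
    ∀ s : Set (Fin d → Bool), φ '' s ∈ cubes ↔ IsCubeFace s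

/-- A cubical complex is neighbourly if every pair of vertices lies in a common cube. -/
def IsNeighbourly {V : Type*} (K : AbstractCubicalComplex V) : Prop :=
  ∀ v w : V, ∃ c ∈ K.cubes, v ∈ c ∧ w ∈ c

/-- The graph of an abstract cubical complex: two vertices are adjacent iff they form
a 1-dimensional cube of the complex. -/
def complexGraph {V : Type*} (K : AbstractCubicalComplex V) : SimpleGraph V where
  Adj v w := v ≠ w ∧ ({v, w} : Set V) ∈ K.cubes
  symm := by
    constructor
    intro v w h
    exact ⟨h.1.symm, Set.pair_comm v w ▸ h.2⟩
  loopless := by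
    constructor
    intro v h
    exact h.1 rfl

/-- The set of edges of `G` with exactly one endpoint in `X`. -/
def edgeBoundary {V : Type*} (G : SimpleGraph V) (X : Set V) : Set (Sym2 V) :=
  {e | e ∈ G.edgeSet ∧ ∃ v w, e = s(v, w) ∧ v ∈ X ∧ w ∉ X}


namespace NCC


lemma bool_resolve {x y z : Bool} (h1 : z ≠ x) (h2 : y ≠ x) : z = y := by
  cases x <;> cases y <;> cases z <;> simp_all

lemma isCubeFace_univ {d : ℕ} : IsCubeFace (Set.univ : Set (Fin d → Bool)) :=
  ⟨∅, fun _ => true, by ext x; simp⟩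

lemma isCubeFace_span {d : ℕ} (x y : Fin d → Bool) :
    IsCubeFace {z | ∀ j, x j = y j → z j = x j} :=
  ⟨{j | x j = y j}, x, rfl⟩

lemma isCubeFace_pair_of_single_diff {d : ℕ} {a b : Fin d → Bool} (i : Fin d)
    (hi : a i ≠ b i) (hj : ∀ j, j ≠ i → a j = b j) :
    IsCubeFace ({a, b} : Set (Fin d → Bool)) := by
  refine ⟨{i}ᶜ, a, ?_⟩
  ext z
  simp only [Set.mem_insert_iff, Set.mem_singleton_iff, Set.mem_compl_iff,
    Set.mem_setOf_eq, Set.mem_singleton_iff]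
  constructor
  · rintro (rfl | rfl)
    · intro j _; rfl
    · intro j hji; exact (hj j hji).symm
  · intro h
    by_cases hz : z i = a i
    · left; funext j
      by_cases hji : j = i
      · rw [hji]; exact hz
      · exact h j hji
    · right; funext j
      by_cases hji : j = i
      · rw [hji]
        exact bool_resolve hz (Ne.symm hi)
      · rw [h j hji, hj j hji]

lemma single_diff_of_isCubeFace_pair {d : ℕ} {a b : Fin d → Bool}
    (h : IsCubeFace ({a, b} : Set (Fin d → Bool))) (hab : a ≠ b) :
    ∃ i, a i ≠ b i ∧ ∀ j, j ≠ i → a j = b j := by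
  obtain ⟨S, c, hS⟩ := h
  obtain ⟨i, hi⟩ := Function.ne_iff.1 hab
  refine ⟨i, hi, ?_⟩
  have ha : ∀ j ∈ S, a j = c j := by
    have : a ∈ ({a, b} : Set (Fin d → Bool)) := Set.mem_insert _ _
    rwa [hS] at this
  have hb : ∀ j ∈ S, b j = c j := by
    have : b ∈ ({a, b} : Set (Fin d → Bool)) := Set.mem_insert_of_mem _ rfl
    rwa [hS] at this
  intro j hji
  by_contra hja
  have hjS : j ∉ S := fun hjmem => hja ((ha j hjmem).trans (hb j hjmem).symm)
  have hz : Function.update a j (b j) ∈ ({a, b} : Set (Fin d → Bool)) := by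
    rw [hS]
    intro k hk
    rw [Function.update_of_ne (show k ≠ j from fun hkj => hjS (hkj ▸ hk))]
    exact ha k hk
  rcases hz with hz | hz
  · have := congrFun hz j
    rw [Function.update_self] at this
    exact hja this.symm
  · have := congrFun hz i
    rw [Function.update_of_ne (Ne.symm hji)] at this
    exact hi this


variable {V : Type*} {K : AbstractCubicalComplex V}


/-- A chart for a cube of the complex. -/
structure Chart (K : AbstractCubicalComplex V) (c : Set V) where
  d : ℕ
  φ : (Fin d → Bool) → V
  inj : Function.Injective φ
  rng : Set.range φ = c
  face_iff : ∀ s : Set (Fin d → Bool), φ '' s ∈ K.cubes ↔ IsCubeFace s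

noncomputable def chartOf (K : AbstractCubicalComplex V) (c : Set V) (hc : c ∈ K.cubes) :
    Chart K c :=
  Classical.choice (by
    obtain ⟨d, φ, h1, h2, h3⟩ := K.cube_structure c hc
    exact ⟨⟨d, φ, h1, h2, h3⟩⟩)

namespace Chart

variable {c : Set V} (ch : Chart K c)

lemma mem_cube (x : Fin ch.d → Bool) : ch.φ x ∈ c := by
  have : ch.φ x ∈ Set.range ch.φ := Set.mem_range_self x
  rwa [ch.rng] at this

lemma cube_mem (ch : Chart K c) : c ∈ K.cubes := by
  have := (ch.face_iff Set.univ).2 isCubeFace_univ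
  rwa [Set.image_univ, ch.rng] at this

/-- preimage of a point of the cube -/
noncomputable def pre (v : V) (hv : v ∈ c) : Fin ch.d → Bool :=
  (show ∃ x, ch.φ x = v by rwa [← ch.rng] at hv).choose

@[simp] lemma pre_spec (v : V) (hv : v ∈ c) : ch.φ (ch.pre v hv) = v :=
  (show ∃ x, ch.φ x = v by rwa [← ch.rng] at hv).choose_spec

def spanSet (x y : Fin ch.d → Bool) : Set (Fin ch.d → Bool) :=
  {z | ∀ j, x j = y j → z j = x j}

def span (x y : Fin ch.d → Bool) : Set V := ch.φ '' ch.spanSet x y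

lemma span_mem (x y : Fin ch.d → Bool) : ch.span x y ∈ K.cubes :=
  (ch.face_iff _).2 (isCubeFace_span x y)

lemma mem_span_left (x y : Fin ch.d → Bool) : ch.φ x ∈ ch.span x y :=
  Set.mem_image_of_mem _ (fun _ _ => rfl)

lemma mem_span_right (x y : Fin ch.d → Bool) : ch.φ y ∈ ch.span x y :=
  Set.mem_image_of_mem _ (fun _ h => h.symm)

/-- The span of two points is contained in any cube containing both. -/
lemma span_subset (x y : Fin ch.d → Bool) {c' : Set V} (hc' : c' ∈ K.cubes)
    (hx : ch.φ x ∈ c') (hy : ch.φ y ∈ c') : ch.span x y ⊆ c' := by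
  have hcc' : c ∩ c' ∈ K.cubes := by
    rcases K.inter_closed c ch.cube_mem c' hc' with h | h
    · exact absurd (Set.eq_empty_iff_forall_notMem.1 h (ch.φ x))
        (by simp [ch.mem_cube x, hx])
    · exact h
  have hsub : c ∩ c' ⊆ Set.range ch.φ := by rw [ch.rng]; exact Set.inter_subset_left
  have himg : ch.φ '' (ch.φ ⁻¹' (c ∩ c')) = c ∩ c' := Set.image_preimage_eq_of_subset hsub
  have hface : IsCubeFace (ch.φ ⁻¹' (c ∩ c')) := (ch.face_iff _).1 (by rwa [himg])
  obtain ⟨S, a, hS⟩ := hface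
  have hxm : x ∈ ch.φ ⁻¹' (c ∩ c') := Set.mem_preimage.2 ⟨ch.mem_cube x, hx⟩
  have hym : y ∈ ch.φ ⁻¹' (c ∩ c') := Set.mem_preimage.2 ⟨ch.mem_cube y, hy⟩
  rw [hS] at hxm hym
  have hsub2 : ch.spanSet x y ⊆ ch.φ ⁻¹' (c ∩ c') := by
    intro z hz
    rw [hS]
    intro j hj
    rw [hz j ((hxm j hj).trans (hym j hj).symm), hxm j hj]
  intro v hv
  obtain ⟨z, hz, rfl⟩ := hv
  exact (hsub2 hz).2

end Chart

/-- minimal cube containing two vertices -/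
def IsMinCube (K : AbstractCubicalComplex V) (u w : V) (c : Set V) : Prop :=
  c ∈ K.cubes ∧ u ∈ c ∧ w ∈ c ∧ ∀ c' ∈ K.cubes, u ∈ c' → w ∈ c' → c ⊆ c'

lemma IsMinCube.unique {u w : V} {c₁ c₂ : Set V} (h₁ : IsMinCube K u w c₁)
    (h₂ : IsMinCube K u w c₂) : c₁ = c₂ :=
  Set.Subset.antisymm (h₁.2.2.2 c₂ h₂.1 h₂.2.1 h₂.2.2.1) (h₂.2.2.2 c₁ h₁.1 h₁.2.1 h₁.2.2.1)

lemma exists_isMinCube (hK : IsNeighbourly K) (u w : V) : ∃ c, IsMinCube K u w c := by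
  obtain ⟨c, hc, hu, hw⟩ := hK u w
  set ch := chartOf K c hc
  refine ⟨ch.span (ch.pre u hu) (ch.pre w hw), ?_, ?_, ?_, ?_⟩
  · exact ch.span_mem _ _
  · have := ch.mem_span_left (ch.pre u hu) (ch.pre w hw); rwa [ch.pre_spec] at this
  · have := ch.mem_span_right (ch.pre u hu) (ch.pre w hw); rwa [ch.pre_spec] at this
  · intro c' hc' hu' hw'
    exact ch.span_subset _ _ hc' (by rwa [ch.pre_spec]) (by rwa [ch.pre_spec])

/-- in any chart of a minimal cube, the two spanning vertices are antipodal. -/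
lemma IsMinCube.antipodal {u w : V} {c : Set V} (h : IsMinCube K u w c)
    (ch : Chart K c) {x y : Fin ch.d → Bool} (hx : ch.φ x = u) (hy : ch.φ y = w) :
    ∀ j, y j = !(x j) := by
  intro j
  by_contra hj
  have hxy : x j = y j := by
    cases hxj : x j <;> cases hyj : y j <;> simp_all
  -- the span of x y is then a proper subset of c missing points with j-th coord flipped
  have hsub : c ⊆ ch.span x y :=
    h.2.2.2 _ (ch.span_mem x y) (hx ▸ ch.mem_span_left x y) (hy ▸ ch.mem_span_right x y)
  have : ch.φ (Function.update x j (!(x j))) ∈ ch.span x y := hsub (ch.mem_cube _)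
  obtain ⟨z, hz, hzeq⟩ := this
  have hzx := ch.inj hzeq
  have := hz j hxy
  rw [hzx, Function.update_self] at this
  simp at this

/-- a vertex and its antipode in a cube have that cube as minimal cube. -/
lemma isMinCube_antipode {c : Set V} (ch : Chart K c) (x : Fin ch.d → Bool) :
    IsMinCube K (ch.φ x) (ch.φ (fun j => !(x j))) c := by
  refine ⟨ch.cube_mem, ch.mem_cube _, ch.mem_cube _, ?_⟩
  intro c' hc' hu' hw'
  have hspan : ch.span x (fun j => !(x j)) = c := by
    rw [Chart.span, show ch.spanSet x (fun j => !(x j)) = Set.univ from ?_,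
      Set.image_univ, ch.rng]
    ext z
    simp only [Chart.spanSet, Set.mem_setOf_eq, Set.mem_univ, iff_true]
    intro j hj
    simp at hj
  rw [← hspan]
  exact ch.span_subset _ _ hc' hu' hw'


end NCC
-- chunk 3: path machinery
namespace NCC

variable {m : ℕ}

/-- the `t`-th vertex of the monotone path from `x` to its antipode that flips
coordinates in the order given by `π`. -/
def vtx (x : Fin m → Bool) (π : Equiv.Perm (Fin m)) (t : ℕ) : Fin m → Bool :=
  fun j => if (π.symm j : ℕ) < t then !(x j) else x j

@[simp] lemma vtx_zero (x : Fin m → Bool) (π : Equiv.Perm (Fin m)) : vtx x π 0 = x := by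
  funext j; simp [vtx]

@[simp] lemma vtx_last (x : Fin m → Bool) (π : Equiv.Perm (Fin m)) :
    vtx x π m = fun j => !(x j) := by
  funext j; simp [vtx, (π.symm j).isLt]

lemma vtx_succ_eq (x : Fin m → Bool) (π : Equiv.Perm (Fin m)) {t : ℕ} (j : Fin m)
    (hj : (π.symm j : ℕ) ≠ t) : vtx x π (t + 1) j = vtx x π t j := by
  simp only [vtx]
  rcases lt_or_gt_of_ne hj with h | h
  · rw [if_pos h, if_pos (Nat.lt_succ_of_lt h)]
  · rw [if_neg (by omega), if_neg (by omega)]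

lemma vtx_succ_flip (x : Fin m → Bool) (π : Equiv.Perm (Fin m)) {t : ℕ} (j : Fin m)
    (hj : (π.symm j : ℕ) = t) : vtx x π (t + 1) j = !(vtx x π t j) := by
  simp only [vtx, hj]
  rw [if_pos (Nat.lt_succ_self t), if_neg (lt_irrefl t)]

lemma vtx_invol (x : Fin m → Bool) (π : Equiv.Perm (Fin m)) (t : ℕ) :
    vtx (vtx x π t) π t = x := by
  funext j
  simp only [vtx]
  by_cases h : (π.symm j : ℕ) < t <;> simp [h]

/-- the coordinate flipped at step `t`. -/
lemma vtx_step_diff (x : Fin m → Bool) (π : Equiv.Perm (Fin m)) {t : ℕ} (ht : t < m) :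
    (vtx x π t (π ⟨t, ht⟩) ≠ vtx x π (t + 1) (π ⟨t, ht⟩)) ∧
      ∀ j, j ≠ π ⟨t, ht⟩ → vtx x π t j = vtx x π (t + 1) j := by
  constructor
  · rw [vtx_succ_flip x π (π ⟨t, ht⟩) (by simp)]
    cases vtx x π t (π ⟨t, ht⟩) <;> simp
  · intro j hj
    rw [vtx_succ_eq x π j]
    intro hc
    apply hj
    have : π.symm j = ⟨t, ht⟩ := Fin.ext hc
    rw [← this, Equiv.apply_symm_apply]

end NCC
-- chunk 4: step edges, boundary, row bound
namespace NCC
open scoped Nat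

lemma cross_exists (P : ℕ → Prop) (m : ℕ) (h0 : P 0) (hm : ¬ P m) :
    ∃ t, t < m ∧ P t ∧ ¬ P (t + 1) := by
  by_contra hcon
  push_neg at hcon
  apply hm
  have : ∀ t, t ≤ m → P t := by
    intro t
    induction t with
    | zero => intro _; exact h0
    | succ k ih =>
      intro hk
      rcases Classical.em (P (k+1)) with h | h
      · exact h
      · exact absurd (hcon k (by omega) (ih (by omega))) (by exact fun h' => h h')
  exact this m le_rfl

variable {V : Type*} {K : AbstractCubicalComplex V}

def stepEdge {c : Set V} (ch : Chart K c) (x : Fin ch.d → Bool)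
    (π : Equiv.Perm (Fin ch.d)) (t : ℕ) : Sym2 V :=
  s(ch.φ (vtx x π t), ch.φ (vtx x π (t + 1)))

lemma stepEdge_adj {c : Set V} (ch : Chart K c) (x : Fin ch.d → Bool)
    (π : Equiv.Perm (Fin ch.d)) {t : ℕ} (ht : t < ch.d) :
    (complexGraph K).Adj (ch.φ (vtx x π t)) (ch.φ (vtx x π (t + 1))) := by
  obtain ⟨hne, hagree⟩ := vtx_step_diff x π ht
  constructor
  · intro h
    exact hne (by rw [ch.inj h])
  · have himg : ({ch.φ (vtx x π t), ch.φ (vtx x π (t + 1))} : Set V) =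
        ch.φ '' {vtx x π t, vtx x π (t + 1)} := (Set.image_pair _ _ _).symm
    rw [himg]
    exact (ch.face_iff _).2 (isCubeFace_pair_of_single_diff (π ⟨t, ht⟩) hne hagree)

lemma stepEdge_mem_boundary {X : Set V} {c : Set V} (ch : Chart K c) (x : Fin ch.d → Bool)
    (π : Equiv.Perm (Fin ch.d)) {t : ℕ} (ht : t < ch.d)
    (h : (ch.φ (vtx x π t) ∈ X ∧ ch.φ (vtx x π (t + 1)) ∉ X) ∨
      (ch.φ (vtx x π t) ∉ X ∧ ch.φ (vtx x π (t + 1)) ∈ X)) :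
    stepEdge ch x π t ∈ edgeBoundary (complexGraph K) X := by
  constructor
  · exact (SimpleGraph.mem_edgeSet _).2 (stepEdge_adj ch x π ht)
  · rcases h with ⟨h1, h2⟩ | ⟨h1, h2⟩
    · exact ⟨_, _, rfl, h1, h2⟩
    · exact ⟨ch.φ (vtx x π (t + 1)), ch.φ (vtx x π t), Sym2.eq_swap.symm, h2, h1⟩

noncomputable def cubeN [DecidableEq V] {c : Set V} (ch : Chart K c) (x : Fin ch.d → Bool)
    (e : Sym2 V) : ℕ :=
  (Finset.univ.filter
    (fun p : (Equiv.Perm (Fin ch.d)) × Fin ch.d => stepEdge ch x p.1 (p.2 : ℕ) = e)).card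

noncomputable def bnd (K : AbstractCubicalComplex V) (X : Set V) [Fintype V] : Finset (Sym2 V) :=
  (Set.toFinite (edgeBoundary (complexGraph K) X)).toFinset

lemma mem_bnd [Fintype V] {X : Set V} {e : Sym2 V} :
    e ∈ bnd K X ↔ e ∈ edgeBoundary (complexGraph K) X := Set.Finite.mem_toFinset _

lemma row_bound [Fintype V] [DecidableEq V] {X : Set V} {c : Set V} (ch : Chart K c) (x : Fin ch.d → Bool)
    (h : (ch.φ x ∈ X ∧ ch.φ (fun j => !(x j)) ∉ X) ∨
      (ch.φ x ∉ X ∧ ch.φ (fun j => !(x j)) ∈ X)) :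
    (ch.d)! ≤ ∑ e ∈ bnd K X, cubeN ch x e := by
  classical
  have key : ∀ π : Equiv.Perm (Fin ch.d), ∃ t : Fin ch.d,
      stepEdge ch x π (t : ℕ) ∈ edgeBoundary (complexGraph K) X := by
    intro π
    rcases h with ⟨h1, h2⟩ | ⟨h1, h2⟩
    · obtain ⟨t, ht, hPt, hPt1⟩ := cross_exists (fun t => ch.φ (vtx x π t) ∈ X) ch.d
        (by simpa using h1) (by simpa using h2)
      exact ⟨⟨t, ht⟩, stepEdge_mem_boundary ch x π ht (Or.inl ⟨hPt, hPt1⟩)⟩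
    · obtain ⟨t, ht, hPt, hPt1⟩ := cross_exists (fun t => ch.φ (vtx x π t) ∉ X) ch.d
        (by simpa using h1) (by simpa using h2)
      exact ⟨⟨t, ht⟩, stepEdge_mem_boundary ch x π ht (Or.inr ⟨hPt, not_not.1 hPt1⟩)⟩
  choose tf htf using key
  set cross := Finset.univ.filter
    (fun p : Equiv.Perm (Fin ch.d) × Fin ch.d =>
      stepEdge ch x p.1 (p.2 : ℕ) ∈ edgeBoundary (complexGraph K) X) with hcross
  have h1 : (ch.d)! ≤ cross.card := by
    have hcard : (ch.d)! = (Finset.univ : Finset (Equiv.Perm (Fin ch.d))).card := by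
      rw [Finset.card_univ, Fintype.card_perm, Fintype.card_fin]
    rw [hcard]
    apply Finset.card_le_card_of_injOn (fun π => (π, tf π))
    · intro π _
      simp only [hcross, Finset.mem_coe, Finset.mem_filter, Finset.mem_univ, true_and]
      exact htf π
    · intro π _ π' _ hpp
      exact congrArg Prod.fst hpp
  have h2 : cross.card = ∑ e ∈ bnd K X,
      (cross.filter (fun p => stepEdge ch x p.1 (p.2 : ℕ) = e)).card := by
    apply Finset.card_eq_sum_card_fiberwise
    intro p hp
    rw [Finset.mem_coe, mem_bnd]
    exact (Finset.mem_filter.1 (Finset.mem_coe.1 hp)).2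
  have h3 : ∀ e, (cross.filter (fun p => stepEdge ch x p.1 (p.2 : ℕ) = e)).card ≤
      cubeN ch x e := by
    intro e
    apply Finset.card_le_card
    intro p hp
    have := Finset.mem_filter.1 hp
    simp only [cubeN, Finset.mem_filter, Finset.mem_univ, true_and]
    exact this.2
  calc (ch.d)! ≤ cross.card := h1
    _ = _ := h2
    _ ≤ _ := Finset.sum_le_sum (fun e _ => h3 e)

end NCC
-- chunk 5: per-cube column bound
namespace NCC
open scoped Nat

variable {V : Type*} {K : AbstractCubicalComplex V}

lemma exists_single_diff_edge {c : Set V} (ch : Chart K c) {v w : V} (hv : v ∈ c)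
    (hw : w ∈ c) (hvw : v ≠ w) (hcube : ({v, w} : Set V) ∈ K.cubes) :
    ∃ i, ch.pre v hv i ≠ ch.pre w hw i ∧ ∀ j, j ≠ i → ch.pre v hv j = ch.pre w hw j := by
  have himg : ch.φ '' {ch.pre v hv, ch.pre w hw} = {v, w} := by
    rw [Set.image_pair, ch.pre_spec, ch.pre_spec]
  have hface : IsCubeFace ({ch.pre v hv, ch.pre w hw} : Set (Fin ch.d → Bool)) :=
    (ch.face_iff _).1 (by rwa [himg])
  apply single_diff_of_isCubeFace_pair hface
  intro hab
  exact hvw (by rw [← ch.pre_spec v hv, ← ch.pre_spec w hw, hab])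

lemma sum_cubeN_le [DecidableEq V] {c : Set V} (ch : Chart K c) {v w : V} (hv : v ∈ c) (hw : w ∈ c)
    (hvw : v ≠ w) (hcube : ({v, w} : Set V) ∈ K.cubes) :
    ∑ x : Fin ch.d → Bool, cubeN ch x (s(v, w)) ≤ 2 * (ch.d)! := by
  classical
  obtain ⟨i, hi, hagree⟩ := exists_single_diff_edge ch hv hw hvw hcube
  set a := ch.pre v hv with ha
  set b := ch.pre w hw with hb
  set T := Finset.univ.filter
    (fun s : (Fin ch.d → Bool) × Equiv.Perm (Fin ch.d) × Fin ch.d =>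
      stepEdge ch s.1 s.2.1 (s.2.2 : ℕ) = s(v, w)) with hT
  -- the sum equals the cardinality of T
  have hsum : ∑ x : Fin ch.d → Bool, cubeN ch x (s(v, w)) = T.card := by
    rw [Finset.card_eq_sum_card_fiberwise
      (f := fun s : (Fin ch.d → Bool) × Equiv.Perm (Fin ch.d) × Fin ch.d => s.1)
      (t := Finset.univ) (fun s _ => Finset.mem_univ _)]
    apply Finset.sum_congr rfl
    intro x _
    rw [cubeN]
    apply Finset.card_bij' (fun p _ => (x, p)) (fun s _ => s.2)
    · intro p hp
      have hp' : stepEdge ch x p.1 (p.2 : ℕ) = s(v, w) := (Finset.mem_filter.1 hp).2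
      exact Finset.mem_filter.2 ⟨Finset.mem_filter.2 ⟨Finset.mem_univ _, hp'⟩, rfl⟩
    · intro s hs
      have hx : s.1 = x := (Finset.mem_filter.1 hs).2
      have hstep : stepEdge ch s.1 s.2.1 (s.2.2 : ℕ) = s(v, w) :=
        (Finset.mem_filter.1 ((Finset.mem_filter.1 hs).1)).2
      refine Finset.mem_filter.2 ⟨Finset.mem_univ _, ?_⟩
      rw [← hx]
      exact hstep
    · intro p _
      rfl
    · intro s hs
      have hx : s.1 = x := (Finset.mem_filter.1 hs).2
      exact Prod.ext hx.symm rfl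
  rw [hsum]
  -- now an injection into Bool × Perm
  have hinj : T.card ≤ Fintype.card (Bool × Equiv.Perm (Fin ch.d)) := by
    rw [← Finset.card_univ]
    apply Finset.card_le_card_of_injOn
      (fun s => ((decide (ch.φ (vtx s.1 s.2.1 (s.2.2 : ℕ)) = v)), s.2.1))
      (fun _ _ => Finset.mem_univ _)
    intro s hs s' hs' heq
    simp only [hT, Finset.mem_filter, Finset.mem_univ, true_and, Finset.coe_filter,
      Set.mem_setOf_eq] at hs hs'
    obtain ⟨hπ, hbit⟩ : s.2.1 = s'.2.1 ∧
        decide (ch.φ (vtx s.1 s.2.1 (s.2.2 : ℕ)) = v) =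
          decide (ch.φ (vtx s'.1 s'.2.1 (s'.2.2 : ℕ)) = v) := by
      have h1 := congrArg Prod.fst heq
      have h2 := congrArg Prod.snd heq
      exact ⟨h2, h1⟩
    -- analyze the two membership conditions
    have key : ∀ u : (Fin ch.d → Bool) × Equiv.Perm (Fin ch.d) × Fin ch.d,
        stepEdge ch u.1 u.2.1 (u.2.2 : ℕ) = s(v, w) →
        ((vtx u.1 u.2.1 (u.2.2 : ℕ) = a ∧ vtx u.1 u.2.1 ((u.2.2 : ℕ) + 1) = b) ∨
         (vtx u.1 u.2.1 (u.2.2 : ℕ) = b ∧ vtx u.1 u.2.1 ((u.2.2 : ℕ) + 1) = a)) ∧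
        ((u.2.2 : ℕ)) = ((u.2.1.symm i : ℕ)) := by
      intro u hu
      rw [stepEdge, Sym2.eq_iff] at hu
      have hcases : (vtx u.1 u.2.1 (u.2.2 : ℕ) = a ∧ vtx u.1 u.2.1 ((u.2.2 : ℕ) + 1) = b) ∨
          (vtx u.1 u.2.1 (u.2.2 : ℕ) = b ∧ vtx u.1 u.2.1 ((u.2.2 : ℕ) + 1) = a) := by
        rcases hu with ⟨h1, h2⟩ | ⟨h1, h2⟩
        · left
          constructor
          · apply ch.inj; rw [h1, ch.pre_spec]
          · apply ch.inj; rw [h2, ch.pre_spec]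
        · right
          constructor
          · apply ch.inj; rw [h1, ch.pre_spec]
          · apply ch.inj; rw [h2, ch.pre_spec]
      refine ⟨hcases, ?_⟩
      by_contra hne
      have := vtx_succ_eq u.1 u.2.1 i (fun hc => hne hc.symm)
      rcases hcases with ⟨h1, h2⟩ | ⟨h1, h2⟩
      · rw [h1, h2] at this; exact hi this.symm
      · rw [h1, h2] at this; exact hi this
    obtain ⟨hc1, ht1⟩ := key s hs
    obtain ⟨hc2, ht2⟩ := key s' hs'
    have htt : s.2.2 = s'.2.2 := by
      apply Fin.ext
      rw [ht1, ht2, hπ]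
    -- same orientation bit forces the same case
    have hvw' : ch.φ b ≠ v := by rw [hb, ch.pre_spec]; exact Ne.symm hvw
    have hsame : vtx s.1 s.2.1 (s.2.2 : ℕ) = vtx s'.1 s'.2.1 (s'.2.2 : ℕ) := by
      rcases hc1 with ⟨h1, _⟩ | ⟨h1, _⟩ <;> rcases hc2 with ⟨h1', _⟩ | ⟨h1', _⟩
      · rw [h1, h1']
      · exfalso
        rw [h1, h1', ha, hb, ch.pre_spec, ch.pre_spec] at hbit
        simp at hbit
        exact hvw hbit.symm
      · exfalso
        rw [h1, h1', ha, hb, ch.pre_spec, ch.pre_spec] at hbit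
        simp at hbit
        exact hvw hbit.symm
      · rw [h1, h1']
    have hx : s.1 = s'.1 := by
      rw [← vtx_invol s.1 s.2.1 (s.2.2 : ℕ), hsame, hπ, htt, vtx_invol]
    exact Prod.ext hx (Prod.ext hπ htt)
  calc T.card ≤ Fintype.card (Bool × Equiv.Perm (Fin ch.d)) := hinj
    _ = 2 * (ch.d)! := by
        rw [Fintype.card_prod, Fintype.card_bool, Fintype.card_perm, Fintype.card_fin]

end NCC
-- chunk 6: minimal cubes of pairs, weights, column bound
namespace NCC
open scoped Nat

variable {V : Type*} {K : AbstractCubicalComplex V}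

noncomputable def minC (hK : IsNeighbourly K) (u w : V) : Set V :=
  (exists_isMinCube hK u w).choose

lemma minC_spec (hK : IsNeighbourly K) (u w : V) : IsMinCube K u w (minC hK u w) :=
  (exists_isMinCube hK u w).choose_spec

noncomputable def mchart (hK : IsNeighbourly K) (u w : V) : Chart K (minC hK u w) :=
  chartOf K _ (minC_spec hK u w).1

noncomputable def base (hK : IsNeighbourly K) (u w : V) : Fin (mchart hK u w).d → Bool :=
  (mchart hK u w).pre u (minC_spec hK u w).2.1

lemma base_spec (hK : IsNeighbourly K) (u w : V) :
    (mchart hK u w).φ (base hK u w) = u := Chart.pre_spec _ _ _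

lemma cobase_spec (hK : IsNeighbourly K) (u w : V) :
    (mchart hK u w).φ (fun j => !(base hK u w j)) = w := by
  have hw : w ∈ minC hK u w := (minC_spec hK u w).2.2.1
  have hanti := (minC_spec hK u w).antipodal (mchart hK u w)
      (base_spec hK u w) ((mchart hK u w).pre_spec w hw)
  have hfun : (fun j => !(base hK u w j)) = (mchart hK u w).pre w hw := by
    funext j; rw [hanti j]
  rw [hfun, Chart.pre_spec]

noncomputable def wt [DecidableEq V] (hK : IsNeighbourly K) (u w : V) (e : Sym2 V) : ℚ :=
  (cubeN (mchart hK u w) (base hK u w) e : ℚ) / ((mchart hK u w).d)!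

lemma wt_nonneg [DecidableEq V] (hK : IsNeighbourly K) (u w : V) (e : Sym2 V) :
    0 ≤ wt hK u w e :=
  div_nonneg (Nat.cast_nonneg _) (Nat.cast_nonneg _)

lemma wt_eq_of_minC_eq [DecidableEq V] (hK : IsNeighbourly K) {u w : V} {c : Set V}
    (h : minC hK u w = c) (hc : c ∈ K.cubes) (hu : u ∈ c) (e : Sym2 V) :
    wt hK u w e = (cubeN (chartOf K c hc) ((chartOf K c hc).pre u hu) e : ℚ) /
      ((chartOf K c hc).d)! := by
  subst h; rfl

lemma cobase_eq [DecidableEq V] (hK : IsNeighbourly K) {u w : V} {c : Set V}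
    (h : minC hK u w = c) (hc : c ∈ K.cubes) (hu : u ∈ c) :
    (chartOf K c hc).φ (fun j => !((chartOf K c hc).pre u hu j)) = w := by
  subst h; exact cobase_spec hK u w

noncomputable def antipode (c : Set V) (hc : c ∈ K.cubes) (u : V) (hu : u ∈ c) : V :=
  (chartOf K c hc).φ (fun j => !((chartOf K c hc).pre u hu j))

lemma antipode_isMinCube (c : Set V) (hc : c ∈ K.cubes) (u : V) (hu : u ∈ c) :
    IsMinCube K u (antipode c hc u hu) c := by
  have := isMinCube_antipode (chartOf K c hc) ((chartOf K c hc).pre u hu)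
  rwa [Chart.pre_spec] at this

lemma antipode_mixed {c₁ c₂ : Set V} (hc₁ : c₁ ∈ K.cubes) (hc₂ : c₂ ∈ K.cubes)
    {v w : V} (hvw : v ≠ w) (hcube : ({v, w} : Set V) ∈ K.cubes)
    (hv₁ : v ∈ c₁) (hw₁ : w ∈ c₁) (hv₂ : v ∈ c₂) (hw₂ : w ∈ c₂)
    (heq : antipode c₁ hc₁ v hv₁ = antipode c₂ hc₂ w hw₂) : False := by
  set ch₂ := chartOf K c₂ hc₂ with hch₂
  set a₂ := ch₂.pre v hv₂ with ha₂
  set b₂ := ch₂.pre w hw₂ with hb₂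
  obtain ⟨i, hi, hagree⟩ := exists_single_diff_edge ch₂ hv₂ hw₂ hvw hcube
  rw [← ha₂, ← hb₂] at hi
  set z := antipode c₁ hc₁ v hv₁ with hz
  have h₁ : IsMinCube K v z c₁ := antipode_isMinCube c₁ hc₁ v hv₁
  have hzc₂ : z = ch₂.φ (fun j => !(b₂ j)) := heq
  have hspan_mem : ch₂.span a₂ (fun j => !(b₂ j)) ∈ K.cubes := ch₂.span_mem _ _
  have hv_span : v ∈ ch₂.span a₂ (fun j => !(b₂ j)) := by
    have := ch₂.mem_span_left a₂ (fun j => !(b₂ j))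
    rwa [ha₂, ch₂.pre_spec] at this
  have hz_span : z ∈ ch₂.span a₂ (fun j => !(b₂ j)) := by
    rw [hzc₂]; exact ch₂.mem_span_right _ _
  have hsub : c₁ ⊆ ch₂.span a₂ (fun j => !(b₂ j)) := h₁.2.2.2 _ hspan_mem hv_span hz_span
  obtain ⟨zz, hzz, hzzeq⟩ := hsub hw₁
  have hzzb : zz = b₂ := ch₂.inj (by rw [hzzeq, hb₂, ch₂.pre_spec])
  have hib : a₂ i = !(b₂ i) := by
    revert hi; cases a₂ i <;> cases b₂ i <;> simp
  have hbi := hzz i hib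
  rw [hzzb] at hbi
  rw [hbi] at hib
  simp at hib
end NCC
-- chunk 7: the column bound
namespace NCC
open scoped Nat

variable {V : Type*} {K : AbstractCubicalComplex V}

lemma two_mul_card_cubes_le [Fintype V] [DecidableEq V]
    {v w : V} (hvw : v ≠ w) (hcube : ({v, w} : Set V) ∈ K.cubes) :
    2 * ((Set.toFinite {c : Set V | c ∈ K.cubes ∧ v ∈ c ∧ w ∈ c}).toFinset).card ≤
      Fintype.card V := by
  classical
  set Ce := (Set.toFinite {c : Set V | c ∈ K.cubes ∧ v ∈ c ∧ w ∈ c}).toFinset with hCe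
  have hmem : ∀ c, c ∈ Ce ↔ c ∈ K.cubes ∧ v ∈ c ∧ w ∈ c := by
    intro c; rw [hCe, Set.Finite.mem_toFinset]; rfl
  set O : Set V → Finset V := fun c =>
    if h : c ∈ K.cubes ∧ v ∈ c ∧ w ∈ c then
      {antipode c h.1 v h.2.1, antipode c h.1 w h.2.2} else ∅ with hO
  have hcard2 : ∀ c ∈ Ce, (O c).card = 2 := by
    intro c hc
    obtain ⟨h1, h2, h3⟩ := (hmem c).1 hc
    rw [hO]
    simp only []
    rw [dif_pos ⟨h1, h2, h3⟩]
    apply Finset.card_pair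
    intro hcontr
    apply hvw
    set ch := chartOf K c h1
    have := ch.inj hcontr
    have hpre : ch.pre v h2 = ch.pre w h3 := by
      funext j
      have := congrFun this j
      simpa using this
    rw [← ch.pre_spec v h2, ← ch.pre_spec w h3, hpre]
  have hdisj : ∀ c₁ ∈ Ce, ∀ c₂ ∈ Ce, c₁ ≠ c₂ → Disjoint (O c₁) (O c₂) := by
    intro c₁ hc₁' c₂ hc₂' hne
    obtain ⟨h1, h2, h3⟩ := (hmem c₁).1 hc₁'
    obtain ⟨g1, g2, g3⟩ := (hmem c₂).1 hc₂'
    rw [Finset.disjoint_left]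
    intro z hz₁ hz₂
    rw [hO] at hz₁ hz₂
    simp only [] at hz₁ hz₂
    rw [dif_pos ⟨h1, h2, h3⟩] at hz₁
    rw [dif_pos ⟨g1, g2, g3⟩] at hz₂
    have hcube' : ({w, v} : Set V) ∈ K.cubes := by rwa [Set.pair_comm]
    rcases Finset.mem_insert.1 hz₁ with rfl | hz₁ <;>
      [skip; rw [Finset.mem_singleton] at hz₁]
    · rcases Finset.mem_insert.1 hz₂ with heq | hz₂
      · exact hne ((antipode_isMinCube c₁ h1 v h2).unique
          (heq ▸ antipode_isMinCube c₂ g1 v g2))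
      · rw [Finset.mem_singleton] at hz₂
        exact antipode_mixed h1 g1 hvw hcube h2 h3 g2 g3 hz₂
    · subst hz₁
      rcases Finset.mem_insert.1 hz₂ with heq | hz₂
      · exact antipode_mixed h1 g1 (Ne.symm hvw) hcube' h3 h2 g3 g2 heq
      · rw [Finset.mem_singleton] at hz₂
        exact hne ((antipode_isMinCube c₁ h1 w h3).unique
          (hz₂ ▸ antipode_isMinCube c₂ g1 w g3))
  calc 2 * Ce.card = ∑ c ∈ Ce, (O c).card := by
        rw [Finset.sum_congr rfl hcard2, Finset.sum_const, smul_eq_mul, mul_comm]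
    _ = (Ce.biUnion O).card := (Finset.card_biUnion hdisj).symm
    _ ≤ Fintype.card V := by
        rw [← Finset.card_univ]
        exact Finset.card_le_card (Finset.subset_univ _)

lemma col_bound [Fintype V] [DecidableEq V] (hK : IsNeighbourly K) {X : Set V} {e : Sym2 V}
    (he : e ∈ edgeBoundary (complexGraph K) X) :
    ∑ q : V × V, wt hK q.1 q.2 e ≤ (Fintype.card V : ℚ) := by
  classical
  obtain ⟨heE, v, w, hevw, hvX, hwX⟩ := he
  subst hevw
  have hadj : (complexGraph K).Adj v w := (SimpleGraph.mem_edgeSet _).1 heE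
  have hvw : v ≠ w := hadj.1
  have hcube : ({v, w} : Set V) ∈ K.cubes := hadj.2
  set Ce := (Set.toFinite {c : Set V | c ∈ K.cubes ∧ v ∈ c ∧ w ∈ c}).toFinset with hCe
  have hmem : ∀ c, c ∈ Ce ↔ c ∈ K.cubes ∧ v ∈ c ∧ w ∈ c := by
    intro c; rw [hCe, Set.Finite.mem_toFinset]; rfl
  -- pairs with nonzero weight have their min cube in Ce
  have step0 : ∀ q : V × V, wt hK q.1 q.2 (s(v, w)) ≠ 0 → minC hK q.1 q.2 ∈ Ce := by
    intro q hq
    have hN : cubeN (mchart hK q.1 q.2) (base hK q.1 q.2) (s(v, w)) ≠ 0 := by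
      intro h0
      apply hq
      rw [wt, h0]
      simp
    obtain ⟨p, hp⟩ := Finset.card_ne_zero.1 hN
    have hstep : stepEdge (mchart hK q.1 q.2) (base hK q.1 q.2) p.1 (p.2 : ℕ) = s(v, w) :=
      (Finset.mem_filter.1 hp).2
    rw [stepEdge, Sym2.eq_iff] at hstep
    rw [hmem]
    refine ⟨(minC_spec hK q.1 q.2).1, ?_, ?_⟩
    · rcases hstep with ⟨h1, _⟩ | ⟨_, h2⟩
      · rw [← h1]; exact (mchart hK q.1 q.2).mem_cube _
      · rw [← h2]; exact (mchart hK q.1 q.2).mem_cube _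
    · rcases hstep with ⟨_, h2⟩ | ⟨h1, _⟩
      · rw [← h2]; exact (mchart hK q.1 q.2).mem_cube _
      · rw [← h1]; exact (mchart hK q.1 q.2).mem_cube _
  -- per-cube bound
  have percube : ∀ c ∈ Ce,
      ∑ q ∈ (Finset.univ.filter (fun q : V × V => wt hK q.1 q.2 (s(v, w)) ≠ 0)).filter
        (fun q => minC hK q.1 q.2 = c), wt hK q.1 q.2 (s(v, w)) ≤ 2 := by
    intro c hcmem
    obtain ⟨hc, hvc, hwc⟩ := (hmem c).1 hcmem
    set ch := chartOf K c hc with hch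
    set g : V × V → (Fin ch.d → Bool) := fun q =>
      if h : q.1 ∈ c then ch.pre q.1 h else (fun _ => true) with hg
    set fib := (Finset.univ.filter (fun q : V × V => wt hK q.1 q.2 (s(v, w)) ≠ 0)).filter
        (fun q => minC hK q.1 q.2 = c) with hfib
    have hfq : ∀ q ∈ fib, q.1 ∈ c ∧ minC hK q.1 q.2 = c := by
      intro q hq
      have h2 : minC hK q.1 q.2 = c := (Finset.mem_filter.1 hq).2
      exact ⟨h2 ▸ (minC_spec hK q.1 q.2).2.1, h2⟩
    have hwtq : ∀ q ∈ fib, wt hK q.1 q.2 (s(v, w)) =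
        (cubeN ch (g q) (s(v, w)) : ℚ) / ((ch.d))! := by
      intro q hq
      obtain ⟨h1, h2⟩ := hfq q hq
      rw [wt_eq_of_minC_eq hK h2 hc h1]
      rw [hg]
      simp only []
      rw [dif_pos h1]
    have hginj : Set.InjOn g fib := by
      intro q hq q' hq' hgg
      obtain ⟨h1, h2⟩ := hfq q hq
      obtain ⟨h1', h2'⟩ := hfq q' hq'
      have e1 : q.1 = q'.1 := by
        rw [← ch.pre_spec q.1 h1, ← ch.pre_spec q'.1 h1']
        have : g q = ch.pre q.1 h1 := by rw [hg]; simp only []; rw [dif_pos h1]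
        have h' : g q' = ch.pre q'.1 h1' := by rw [hg]; simp only []; rw [dif_pos h1']
        rw [← this, ← h', hgg]
      have e2 : q.2 = q'.2 := by
        have c1 := cobase_eq hK h2 hc h1
        have c2 := cobase_eq hK h2' hc h1'
        rw [← c1, ← c2]
        congr 1
        funext j
        have : g q = ch.pre q.1 h1 := by rw [hg]; simp only []; rw [dif_pos h1]
        have h' : g q' = ch.pre q'.1 h1' := by rw [hg]; simp only []; rw [dif_pos h1']
        rw [← this, ← h', hgg]
      exact Prod.ext e1 e2
    calc ∑ q ∈ fib, wt hK q.1 q.2 (s(v, w))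
        = ∑ q ∈ fib, (cubeN ch (g q) (s(v, w)) : ℚ) / (ch.d)! :=
          Finset.sum_congr rfl hwtq
      _ = ∑ x ∈ fib.image g, (cubeN ch x (s(v, w)) : ℚ) / (ch.d)! := by
          rw [Finset.sum_image (fun q hq q' hq' h => hginj hq hq' h)]
      _ ≤ ∑ x : Fin ch.d → Bool, (cubeN ch x (s(v, w)) : ℚ) / (ch.d)! := by
          apply Finset.sum_le_sum_of_subset_of_nonneg (Finset.subset_univ _)
          intro x _ _
          exact div_nonneg (Nat.cast_nonneg _) (Nat.cast_nonneg _)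
      _ = ((∑ x : Fin ch.d → Bool, cubeN ch x (s(v, w)) : ℕ) : ℚ) / (ch.d)! := by
          rw [← Finset.sum_div, Nat.cast_sum]
      _ ≤ ((2 * (ch.d)! : ℕ) : ℚ) / (ch.d)! := by
          have hle := sum_cubeN_le ch hvc hwc hvw hcube
          exact (div_le_div_iff_of_pos_right (by positivity)).2 (Nat.cast_le.2 hle)
      _ = 2 := by
          rw [Nat.cast_mul]
          rw [mul_div_assoc, div_self (by positivity), mul_one]
          norm_num
  calc ∑ q : V × V, wt hK q.1 q.2 (s(v, w))
      = ∑ q ∈ Finset.univ.filter (fun q : V × V => wt hK q.1 q.2 (s(v, w)) ≠ 0),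
          wt hK q.1 q.2 (s(v, w)) := (Finset.sum_filter_ne_zero _).symm
    _ = ∑ c ∈ Ce, ∑ q ∈ (Finset.univ.filter
          (fun q : V × V => wt hK q.1 q.2 (s(v, w)) ≠ 0)).filter
          (fun q => minC hK q.1 q.2 = c), wt hK q.1 q.2 (s(v, w)) :=
        (Finset.sum_fiberwise_of_maps_to
          (fun q hq => step0 q (Finset.mem_filter.1 hq).2) _).symm
    _ ≤ ∑ _c ∈ Ce, (2 : ℚ) := Finset.sum_le_sum percube
    _ = 2 * Ce.card := by
        rw [Finset.sum_const, nsmul_eq_mul, mul_comm]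
    _ ≤ (Fintype.card V : ℚ) := by
        have h2 := two_mul_card_cubes_le (K := K) hvw hcube
        exact_mod_cast h2

end NCC
-- chunk 8: main theorem
open NCC in
/-- The graph of a neighbourly cubical complex on a finite vertex set has edge
expansion at least 1: every nonempty vertex set `X` with `|X| ≤ |V|/2` has at least
`|X|` boundary edges. -/
theorem edge_expansion_of_neighbourly_cubical_complex
    {V : Type*} [Fintype V] (K : AbstractCubicalComplex V)
    (hK : IsNeighbourly K) (X : Set V) (hX : X.Nonempty)
    (hX2 : 2 * X.ncard ≤ Fintype.card V) :
    X.ncard ≤ (edgeBoundary (complexGraph K) X).ncard := by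
  classical
  set n := Fintype.card V with hn
  set Δ := NCC.bnd K X with hΔ
  have hΔcard : (edgeBoundary (complexGraph K) X).ncard = Δ.card :=
    Set.ncard_eq_toFinset_card _ _
  set Xf := (Set.toFinite X).toFinset with hXf
  set k := Xf.card with hk
  have hXcard : X.ncard = k := Set.ncard_eq_toFinset_card _ _
  have hkn : k ≤ n := by
    rw [hn, ← Finset.card_univ]
    exact Finset.card_le_card (Finset.subset_univ _)
  have hk2 : 2 * k ≤ n := by rw [← hXcard]; exact hX2
  set cross := (Xf ×ˢ Xfᶜ) ∪ (Xfᶜ ×ˢ Xf) with hcross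
  have hcrosscard : cross.card = k * (n - k) + (n - k) * k := by
    rw [hcross, Finset.card_union_of_disjoint, Finset.card_product, Finset.card_product,
      Finset.card_compl]
    rw [Finset.disjoint_left]
    intro q hq1 hq2
    have h1 := (Finset.mem_product.1 hq1).1
    have h2 := (Finset.mem_product.1 hq2).1
    exact (Finset.mem_compl.1 h2) h1
  have hrow : ∀ q ∈ cross, (1 : ℚ) ≤ ∑ e ∈ Δ, NCC.wt hK q.1 q.2 e := by
    intro q hq
    have hq' : (q.1 ∈ X ∧ q.2 ∉ X) ∨ (q.1 ∉ X ∧ q.2 ∈ X) := by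
      rcases Finset.mem_union.1 hq with h | h
      · obtain ⟨ha, hb⟩ := Finset.mem_product.1 h
        exact Or.inl ⟨(Set.Finite.mem_toFinset _).1 ha,
          fun hc => (Finset.mem_compl.1 hb) ((Set.Finite.mem_toFinset _).2 hc)⟩
      · obtain ⟨ha, hb⟩ := Finset.mem_product.1 h
        exact Or.inr ⟨fun hc => (Finset.mem_compl.1 ha) ((Set.Finite.mem_toFinset _).2 hc),
          (Set.Finite.mem_toFinset _).1 hb⟩
    have hhyp : ((NCC.mchart hK q.1 q.2).φ (NCC.base hK q.1 q.2) ∈ X ∧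
        (NCC.mchart hK q.1 q.2).φ (fun j => !(NCC.base hK q.1 q.2 j)) ∉ X) ∨
        ((NCC.mchart hK q.1 q.2).φ (NCC.base hK q.1 q.2) ∉ X ∧
        (NCC.mchart hK q.1 q.2).φ (fun j => !(NCC.base hK q.1 q.2 j)) ∈ X) := by
      rw [NCC.base_spec, NCC.cobase_spec]
      exact hq'
    have hb := NCC.row_bound (NCC.mchart hK q.1 q.2) (NCC.base hK q.1 q.2) hhyp
    have hsum : ∑ e ∈ Δ, NCC.wt hK q.1 q.2 e =
        ((∑ e ∈ Δ, cubeN (NCC.mchart hK q.1 q.2) (NCC.base hK q.1 q.2) e : ℕ) : ℚ) /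
          Nat.factorial (NCC.mchart hK q.1 q.2).d := by
      rw [Nat.cast_sum, Finset.sum_div]
      rfl
    rw [hsum, one_le_div (by positivity)]
    exact_mod_cast hb
  have chain : (cross.card : ℚ) ≤ (Δ.card : ℚ) * n := by
    calc (cross.card : ℚ) = ∑ _q ∈ cross, (1 : ℚ) := by
          rw [Finset.sum_const, nsmul_eq_mul, mul_one]
      _ ≤ ∑ q ∈ cross, ∑ e ∈ Δ, NCC.wt hK q.1 q.2 e := Finset.sum_le_sum hrow
      _ ≤ ∑ q ∈ (Finset.univ : Finset (V × V)), ∑ e ∈ Δ, NCC.wt hK q.1 q.2 e :=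
          Finset.sum_le_sum_of_subset_of_nonneg (Finset.subset_univ _)
            (fun q _ _ => Finset.sum_nonneg (fun e _ => NCC.wt_nonneg hK q.1 q.2 e))
      _ = ∑ e ∈ Δ, ∑ q : V × V, NCC.wt hK q.1 q.2 e := Finset.sum_comm
      _ ≤ ∑ _e ∈ Δ, (n : ℚ) :=
          Finset.sum_le_sum (fun e he => NCC.col_bound hK (NCC.mem_bnd.1 he))
      _ = (Δ.card : ℚ) * n := by rw [Finset.sum_const, nsmul_eq_mul]
  have hnum : (k : ℚ) * n ≤ (cross.card : ℚ) := by
    have hcc : (cross.card : ℚ) = (k : ℚ) * ((n : ℚ) - k) + ((n : ℚ) - k) * k := by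
      rw [hcrosscard]
      push_cast [hkn]
      ring
    have hk2q : 2 * (k : ℚ) ≤ (n : ℚ) := by exact_mod_cast hk2
    rw [hcc]
    nlinarith [Nat.cast_nonneg (α := ℚ) k]
  have hnpos : 0 < (n : ℚ) := by
    have : 0 < n := by
      rw [hn]
      exact Fintype.card_pos_iff.2 ⟨hX.choose⟩
    exact_mod_cast this
  have hfinal : (k : ℚ) ≤ (Δ.card : ℚ) :=
    le_of_mul_le_mul_right (le_trans hnum chain) hnpos
  rw [hXcard, hΔcard]
  exact_mod_cast hfinal
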